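/- arXiv:2309.02755 — 2 statements merged into one kernel-verified Lean document; each statement's English description precedes it below -/
import Mathlib

section
/- Let G = (N, T, P, S) be a type-0 grammar in Special Geffert Normal Form. Every sentential form derivable from S in G belongs to {A, C}* (N' ∪ {λ}) ({B, D} ∪ T)*; in particular, every derivable sentential form contains at most one occurrence of a nonterminal from N', and if such a nonterminal is present it separates all occurrences of A and C (which lie to its left) from all occurrences of B, D and terminal symbols (which lie to its right). -/
/-!
Type-0 grammars in Special Geffert Normal Form (SGNF).

Symbols are drawn from the universal symbol set `ℕ`; strings (sentential
forms) are lists of symbols; `λ` is the empty string `[]`.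
-/

namespace SGNFPaper

/-- Strings over the universal symbol set `ℕ`. -/
abbrev Word : Type := List ℕ

/-- A type-0 grammar `G = (N, T, P, S)` in Special Geffert Normal Form:
the nonterminal alphabet decomposes as `N = N' ∪ N''` with
`N'' = {A, B, C, D}` (four distinct nonterminals, disjoint from `N'`),
`N'` contains at least `S` and `S'`, nonterminals and terminals are disjoint,
the only non-context-free rules are `AB → λ` and `CD → λ`, and every other
rule is either `S' → λ` or of the form `X → Y₁Y₂` with `X ∈ N' ∖ {S'}` and
`Y₁Y₂ ∈ ((N' ∖ {X})(T ∪ {B, D})) ∪ ({A, C}(N' ∖ {X}))`. -/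
structure Grammar : Type where
  /-- The nonterminal set `N'`. -/
  N' : Finset ℕ
  /-- The terminal alphabet `T`. -/
  T : Finset ℕ
  /-- The four nonterminals of `N'' = {A, B, C, D}`. -/
  A : ℕ
  B : ℕ
  C : ℕ
  D : ℕ
  /-- The start symbol `S`. -/
  S : ℕ
  /-- The distinguished nonterminal `S'`. -/
  S' : ℕ
  /-- The finite set of production rules, a rule `α → β` being the pair `(α, β)`. -/
  P : Finset (Word × Word)
  S_mem : S ∈ N'
  S'_mem : S' ∈ N'
  ABCD_distinct : A ≠ B ∧ A ≠ C ∧ A ≠ D ∧ B ≠ C ∧ B ≠ D ∧ C ≠ D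
  ABCD_not_N' : A ∉ N' ∧ B ∉ N' ∧ C ∉ N' ∧ D ∉ N'
  N_T_disjoint : ∀ a ∈ N' ∪ {A, B, C, D}, a ∉ T
  AB_rule : ([A, B], ([] : Word)) ∈ P
  CD_rule : ([C, D], ([] : Word)) ∈ P
  rules_form : ∀ r ∈ P,
    r = ([A, B], ([] : Word)) ∨ r = ([C, D], ([] : Word)) ∨
    r = ([S'], ([] : Word)) ∨
    ∃ X Y₁ Y₂ : ℕ, r = ([X], [Y₁, Y₂]) ∧ X ∈ N' ∧ X ≠ S' ∧
      ((Y₁ ∈ N' ∧ Y₁ ≠ X ∧ (Y₂ ∈ T ∨ Y₂ = B ∨ Y₂ = D)) ∨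
       ((Y₁ = A ∨ Y₁ = C) ∧ Y₂ ∈ N' ∧ Y₂ ≠ X))

/-- One derivation step: applying a rule `α → β` of `G` to `uαv` yields `uβv`. -/
def Produces (G : Grammar) (w w' : Word) : Prop :=
  ∃ r ∈ G.P, ∃ x y : Word, w = x ++ r.1 ++ y ∧ w' = x ++ r.2 ++ y

/-- The derivation relation `⇒*` of `G` (reflexive-transitive closure). -/
def Derives (G : Grammar) : Word → Word → Prop :=
  Relation.ReflTransGen (Produces G)

lemma mem_right_of_eq {u v x y : Word} {a : ℕ} (h : u ++ v = x ++ a :: y)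
    (hlen : u.length ≤ x.length) : a ∈ v := by
  have hv : v = (x ++ a :: y).drop u.length := by
    rw [← h, List.drop_left]
  rw [List.drop_append, Nat.sub_eq_zero_of_le hlen] at hv
  simp [hv]

lemma mem_left_of_eq {u v x y : Word} {a : ℕ} (h : u ++ v = x ++ a :: y)
    (hlen : x.length < u.length) : a ∈ u := by
  have hu : u = (x ++ a :: y).take u.length := by
    rw [← h, List.take_left]
  rw [List.take_append] at hu
  obtain ⟨m, hm⟩ : ∃ m, u.length - x.length = m + 1 :=
    ⟨u.length - x.length - 1, by omega⟩
  rw [hm, List.take_succ_cons] at hu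
  rw [hu]; simp

/-- The invariant: `w = α ++ mid ++ β` with `α` over `{A,C}`, `β` over
`{B,D} ∪ T`, and `mid` empty or a single nonterminal of `N'`. -/
def Shape (G : Grammar) (w : Word) : Prop :=
  ∃ α mid β : Word, (∀ a ∈ α, a = G.A ∨ a = G.C) ∧
    (∀ b ∈ β, b = G.B ∨ b = G.D ∨ b ∈ G.T) ∧
    (mid = [] ∨ ∃ X ∈ G.N', mid = [X]) ∧ w = α ++ mid ++ β

lemma shape_erase {G : Grammar} {a b : ℕ} {x y : Word}
    (ha : a ∉ G.N' ∧ a ≠ G.B ∧ a ≠ G.D ∧ a ∉ G.T)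
    (hb : b ∉ G.N' ∧ b ≠ G.A ∧ b ≠ G.C)
    (hS : Shape G (x ++ [a, b] ++ y)) : Shape G (x ++ y) := by
  obtain ⟨α, mid, β, hα, hβ, hmid, hw⟩ := hS
  have hamb : a ∉ mid ++ β := by
    intro hm
    rcases List.mem_append.mp hm with hm | hm
    · rcases hmid with rfl | ⟨X, hX, rfl⟩
      · simp at hm
      · simp at hm; exact ha.1 (hm ▸ hX)
    · rcases hβ a hm with h | h | h
      · exact ha.2.1 h
      · exact ha.2.2.1 h
      · exact ha.2.2.2 h
  have hbam : b ∉ α ++ mid := by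
    intro hm
    rcases List.mem_append.mp hm with hm | hm
    · rcases hα b hm with h | h
      · exact hb.2.1 h
      · exact hb.2.2 h
    · rcases hmid with rfl | ⟨X, hX, rfl⟩
      · simp at hm
      · simp at hm; exact hb.1 (hm ▸ hX)
  have heq1 : α ++ (mid ++ β) = x ++ a :: (b :: y) := by
    rw [← List.append_assoc, ← hw]; simp
  have h1 : x.length < α.length := by
    by_contra hle
    exact hamb (mem_right_of_eq heq1 (by omega))
  have heq2 : (α ++ mid) ++ β = (x ++ [a]) ++ b :: y := by
    rw [List.append_assoc, heq1]; simp
  have h2 : (α ++ mid).length ≤ (x ++ [a]).length := by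
    by_contra hle
    exact hbam (mem_left_of_eq heq2 (by omega))
  simp only [List.length_append, List.length_singleton] at h2
  have hmid0 : mid = [] := List.length_eq_zero_iff.mp (by omega)
  subst hmid0
  simp only [List.append_nil] at heq2
  obtain ⟨hα', hβ'⟩ := List.append_inj heq2 (by simp; omega)
  refine ⟨x, [], y, ?_, ?_, Or.inl rfl, by simp⟩
  · intro c hc
    exact hα c (by rw [hα']; simp [hc])
  · intro c hc
    exact hβ c (by rw [hβ']; simp [hc])

lemma shape_mid {G : Grammar} {X : ℕ} {x y : Word} (hX : X ∈ G.N')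
    (hS : Shape G (x ++ [X] ++ y)) :
    (∀ a ∈ x, a = G.A ∨ a = G.C) ∧ (∀ b ∈ y, b = G.B ∨ b = G.D ∨ b ∈ G.T) := by
  obtain ⟨α, mid, β, hα, hβ, hmid, hw⟩ := hS
  have hXα : X ∉ α := by
    intro hm
    rcases hα X hm with h | h
    · exact G.ABCD_not_N'.1 (h ▸ hX)
    · exact G.ABCD_not_N'.2.2.1 (h ▸ hX)
  have hXβ : X ∉ β := by
    intro hm
    rcases hβ X hm with h | h | h
    · exact G.ABCD_not_N'.2.1 (h ▸ hX)
    · exact G.ABCD_not_N'.2.2.2 (h ▸ hX)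
    · exact G.N_T_disjoint X (by simp [hX]) h
  have heq1 : α ++ (mid ++ β) = x ++ X :: y := by
    rw [← List.append_assoc, ← hw]; simp
  have h1 : α.length ≤ x.length := by
    by_contra hle
    exact hXα (mem_left_of_eq heq1 (by omega))
  have heq2 : (α ++ mid) ++ β = x ++ X :: y := by
    rw [List.append_assoc]; exact heq1
  have h2 : x.length < (α ++ mid).length := by
    by_contra hle
    exact hXβ (mem_right_of_eq heq2 (by omega))
  simp only [List.length_append] at h2
  rcases hmid with rfl | ⟨X₀, hX₀, rfl⟩
  · simp at h2; omega
  · have hlen : α.length = x.length := by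
      simp only [List.length_singleton] at h2; omega
    obtain ⟨hα', hβ'⟩ := List.append_inj heq1 hlen
    have hβ'' : β = y := by
      simpa using congrArg List.tail hβ'
    constructor
    · intro c hc; exact hα c (by rw [hα']; exact hc)
    · intro c hc; exact hβ c (by rw [hβ'']; exact hc)

lemma shape_step {G : Grammar} {w w' : Word} (hS : Shape G w)
    (hp : Produces G w w') : Shape G w' := by
  obtain ⟨r, hr, x, y, hw, hw'⟩ := hp
  rcases G.rules_form r hr with rfl | rfl | rfl |
    ⟨X, Y₁, Y₂, rfl, hXN, hXS', hcase⟩ <;> subst hw hw'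
  · -- AB → λ
    have hab := G.ABCD_distinct
    have := shape_erase (G := G) (a := G.A) (b := G.B) (x := x) (y := y)
      ⟨G.ABCD_not_N'.1, hab.1, hab.2.2.1, G.N_T_disjoint G.A (by simp)⟩
      ⟨G.ABCD_not_N'.2.1, Ne.symm hab.1, hab.2.2.2.1⟩ hS
    simpa using this
  · -- CD → λ
    have hab := G.ABCD_distinct
    have := shape_erase (G := G) (a := G.C) (b := G.D) (x := x) (y := y)
      ⟨G.ABCD_not_N'.2.2.1, Ne.symm hab.2.2.2.1, hab.2.2.2.2.2,
        G.N_T_disjoint G.C (by simp)⟩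
      ⟨G.ABCD_not_N'.2.2.2, Ne.symm hab.2.2.1, Ne.symm hab.2.2.2.2.2⟩ hS
    simpa using this
  · -- S' → λ
    obtain ⟨hx, hy⟩ := shape_mid G.S'_mem hS
    exact ⟨x, [], y, hx, hy, Or.inl rfl, by simp⟩
  · -- X → Y₁Y₂
    obtain ⟨hx, hy⟩ := shape_mid hXN hS
    rcases hcase with ⟨hY₁N, _, hY₂⟩ | ⟨hY₁, hY₂N, _⟩
    · refine ⟨x, [Y₁], Y₂ :: y, hx, ?_, Or.inr ⟨Y₁, hY₁N, rfl⟩, by simp⟩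
      intro b hb
      rcases List.mem_cons.mp hb with rfl | hb
      · rcases hY₂ with h | h | h
        · exact Or.inr (Or.inr h)
        · exact Or.inl h
        · exact Or.inr (Or.inl h)
      · exact hy b hb
    · refine ⟨x ++ [Y₁], [Y₂], y, ?_, hy, Or.inr ⟨Y₂, hY₂N, rfl⟩, by simp⟩
      intro a ha
      rcases List.mem_append.mp ha with ha | ha
      · exact hx a ha
      · simp at ha; subst ha
        rcases hY₁ with h | h
        · exact Or.inl h
        · exact Or.inr h

/-- Every sentential form derivable from `S` in a grammar in Special Geffert
Normal Form belongs to `{A, C}* (N' ∪ {λ}) ({B, D} ∪ T)*`: it splits as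
`α ++ β` or `α ++ [X] ++ β` with `α` a string over `{A, C}`, `β` a string over
`{B, D} ∪ T`, and `X ∈ N'`; in particular it contains at most one occurrence
of a nonterminal from `N'`, and if such a nonterminal is present it separates
all occurrences of `A` and `C` (to its left) from all occurrences of `B`, `D`
and terminal symbols (to its right). -/
theorem sentential_form_shape (G : Grammar) (w : Word)
    (h : Derives G [G.S] w) :
    (∃ α β : Word, (∀ a ∈ α, a = G.A ∨ a = G.C) ∧
      (∀ b ∈ β, b = G.B ∨ b = G.D ∨ b ∈ G.T) ∧
      (w = α ++ β ∨ ∃ X ∈ G.N', w = α ++ [X] ++ β)) ∧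
    w.countP (fun a => decide (a ∈ G.N')) ≤ 1 := by

  have hshape : Shape G w := by
    induction h with
    | refl => exact ⟨[], [G.S], [], by simp, by simp, Or.inr ⟨G.S, G.S_mem, rfl⟩, by simp⟩
    | tail _ hp ih => exact shape_step ih hp
  obtain ⟨α, mid, β, hα, hβ, hmid, rfl⟩ := hshape
  have cα : α.countP (fun a => decide (a ∈ G.N')) = 0 := by
    refine List.countP_eq_zero.mpr (fun a ha => ?_)
    rcases hα a ha with rfl | rfl <;>
      simp [G.ABCD_not_N'.1, G.ABCD_not_N'.2.2.1]
  have cβ : β.countP (fun a => decide (a ∈ G.N')) = 0 := by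
    refine List.countP_eq_zero.mpr (fun b hb => ?_)
    rcases hβ b hb with rfl | rfl | h
    · simp [G.ABCD_not_N'.2.1]
    · simp [G.ABCD_not_N'.2.2.2]
    · simp only [decide_eq_true_eq]
      intro hN
      exact G.N_T_disjoint b (by simp [hN]) h
  have cmid : mid.countP (fun a => decide (a ∈ G.N')) ≤ 1 := by
    rcases hmid with rfl | ⟨X, _, rfl⟩
    · simp
    · simpa using List.countP_le_length (p := fun a => decide (a ∈ G.N')) (l := [X])
  constructor
  · refine ⟨α, β, hα, hβ, ?_⟩
    rcases hmid with rfl | ⟨X, hX, rfl⟩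
    · exact Or.inl (by simp)
    · exact Or.inr ⟨X, hX, rfl⟩
  · simp only [List.countP_append, cα, cβ]
    omega


end SGNFPaper
end

section
/- Let G = (N, T, P, S) be a type-0 grammar in Special Geffert Normal Form. Every sentential form derivable from S in G contains at most one occurrence of the substring AB or CD (in total), and if such a substring occurs then the sentential form contains no nonterminal from N'. -/
/-!
Type-0 grammars in Special Geffert Normal Form (SGNF).

Symbols are drawn from the universal symbol set `ℕ`; strings (sentential
forms) are lists of symbols; `λ` is the empty string `[]`.
-/

namespace SGNFPaper

/-- The number of occurrences of `p` as a (contiguous) substring of `w`. -/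
def infixCount (p w : Word) : ℕ :=
  ((List.range w.length).filter
    (fun i => decide ((w.drop i).take p.length = p))).length



lemma split_one {a b x y : Word} {X' X : ℕ}
    (h : a ++ X' :: b = x ++ X :: y) (ha : X ∉ a) (hb : X ∉ b) :
    a = x ∧ X' = X ∧ b = y := by
  induction a generalizing x with
  | nil =>
    cases x with
    | nil => simp_all
    | cons z x' =>
      simp only [List.nil_append, List.cons_append, List.cons.injEq] at h
      exact absurd (h.2 ▸ (List.mem_append_right _ (List.mem_cons_self)) : X ∈ b) hb
  | cons c a' ih =>
    cases x with
    | nil =>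
      simp only [List.cons_append, List.nil_append, List.cons.injEq] at h
      exact absurd (h.1 ▸ List.mem_cons_self) ha
    | cons z x' =>
      simp only [List.cons_append, List.cons.injEq] at h
      have := ih h.2 (fun hx => ha (List.mem_cons_of_mem _ hx))
      exact ⟨by rw [h.1, this.1], this.2.1, this.2.2⟩

lemma split_two {a m b x y : Word} {P Q : ℕ}
    (h : a ++ m ++ b = x ++ P :: Q :: y)
    (hm : m = [] ∨ ∃ X, m = [X] ∧ X ≠ P ∧ X ≠ Q)
    (hPb : P ∉ b) (hQa : Q ∉ a) :
    m = [] ∧ a = x ++ [P] ∧ b = Q :: y := by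
  induction a generalizing x with
  | nil =>
    rcases hm with hm | ⟨X, hm, hXP, hXQ⟩
    · subst hm
      simp only [List.nil_append] at h
      cases x with
      | nil =>
        exact absurd (h ▸ List.mem_cons_self : P ∈ b) hPb
      | cons z x' =>
        simp only [List.cons_append, List.cons.injEq] at h
        exact absurd (h ▸ (by simp : P ∈ z :: (x' ++ P :: Q :: y))) hPb
    · subst hm
      simp only [List.nil_append, List.singleton_append] at h
      cases x with
      | nil =>
        simp only [List.nil_append, List.cons.injEq] at h
        exact absurd h.1 hXP
      | cons z x' =>
        simp only [List.cons_append, List.cons.injEq] at h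
        exact absurd (h.2 ▸ (by simp : P ∈ x' ++ P :: Q :: y)) hPb
  | cons c a' ih =>
    cases x with
    | nil =>
      simp only [List.cons_append, List.nil_append, List.cons.injEq] at h
      obtain ⟨hc, h2⟩ := h
      cases a' with
      | cons c' a'' =>
        simp only [List.cons_append, List.cons.injEq] at h2
        exact absurd (h2.1 ▸ (by simp : c' ∈ c :: c' :: a'')) hQa
      | nil =>
        simp only [List.nil_append] at h2
        rcases hm with hm | ⟨X, hm, hXP, hXQ⟩
        · subst hm
          simp only [List.nil_append] at h2
          exact ⟨rfl, by simp [hc], h2⟩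
        · subst hm
          simp only [List.singleton_append, List.cons.injEq] at h2
          exact absurd h2.1 hXQ
    | cons z x' =>
      simp only [List.cons_append, List.cons.injEq] at h
      have := ih h.2 (fun hx => hQa (List.mem_cons_of_mem _ hx))
      exact ⟨this.1, by rw [h.1, this.2.1]; simp, this.2.2⟩

lemma filter_len_le_one {l : List ℕ} (hl : l.Nodup) {p : ℕ → Bool} {k : ℕ}
    (h : ∀ i ∈ l, p i → i = k) : (l.filter p).length ≤ 1 := by
  have hf : (l.filter p).Nodup := hl.filter p
  have hmem : ∀ i ∈ l.filter p, i = k := fun i hi =>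
    h i (List.mem_of_mem_filter hi) (List.of_mem_filter hi)
  match hfil : l.filter p with
  | [] => simp
  | [x] => simp
  | x :: y :: t =>
    rw [hfil] at hf hmem
    have hx := hmem x (by simp)
    have hy := hmem y (by simp)
    rw [List.nodup_cons] at hf
    exact absurd (by simp [hx.trans hy.symm]) hf.1

/-- Invariant: every sentential form is `{A,C}*` then at most one `N'`
nonterminal then `(T ∪ {B,D})*`. -/
def Inv (G : Grammar) (w : Word) : Prop :=
  ∃ a m b : Word, w = a ++ m ++ b ∧
    (∀ c ∈ a, c = G.A ∨ c = G.C) ∧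
    (m = [] ∨ ∃ X ∈ G.N', m = [X]) ∧
    (∀ c ∈ b, c ∈ G.T ∨ c = G.B ∨ c = G.D)

section Disjoint
variable (G : Grammar)

lemma L_not_N' {c : ℕ} (hc : c = G.A ∨ c = G.C) : c ∉ G.N' := by
  obtain ⟨h1, h2, h3, h4⟩ := G.ABCD_not_N'
  rcases hc with rfl | rfl <;> assumption

lemma R_not_N' {c : ℕ} (hc : c ∈ G.T ∨ c = G.B ∨ c = G.D) : c ∉ G.N' := by
  obtain ⟨h1, h2, h3, h4⟩ := G.ABCD_not_N'
  rcases hc with hc | rfl | rfl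
  · exact fun hN => G.N_T_disjoint c (Finset.mem_union_left _ hN) hc
  · assumption
  · assumption

lemma R_ne_A {c : ℕ} (hc : c ∈ G.T ∨ c = G.B ∨ c = G.D) : c ≠ G.A := by
  obtain ⟨d1, d2, d3, d4, d5, d6⟩ := G.ABCD_distinct
  rcases hc with hc | rfl | rfl
  · rintro rfl
    exact G.N_T_disjoint G.A (Finset.mem_union_right _ (by simp)) hc
  · exact d1.symm
  · exact d3.symm

lemma R_ne_C {c : ℕ} (hc : c ∈ G.T ∨ c = G.B ∨ c = G.D) : c ≠ G.C := by
  obtain ⟨d1, d2, d3, d4, d5, d6⟩ := G.ABCD_distinct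
  rcases hc with hc | rfl | rfl
  · rintro rfl
    exact G.N_T_disjoint G.C (Finset.mem_union_right _ (by simp)) hc
  · exact d4
  · exact d6.symm

lemma L_ne_B {c : ℕ} (hc : c = G.A ∨ c = G.C) : c ≠ G.B := by
  obtain ⟨d1, d2, d3, d4, d5, d6⟩ := G.ABCD_distinct
  rcases hc with rfl | rfl
  · exact d1
  · exact d4.symm

lemma L_ne_D {c : ℕ} (hc : c = G.A ∨ c = G.C) : c ≠ G.D := by
  obtain ⟨d1, d2, d3, d4, d5, d6⟩ := G.ABCD_distinct
  rcases hc with rfl | rfl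
  · exact d3
  · exact d6

end Disjoint

lemma inv_step (G : Grammar) {w w' : Word} (hw : Inv G w)
    (hp : Produces G w w') : Inv G w' := by
  obtain ⟨a, m, b, hdec, hA, hM, hB⟩ := hw
  obtain ⟨r, hr, x, y, hxy, hw'⟩ := hp
  rcases G.rules_form r hr with hform | hform | hform | ⟨X, Y₁, Y₂, hform, hXN, hXS', hY⟩
  -- AB → λ
  · subst hform
    simp only at hxy hw'
    rw [hdec] at hxy
    have hxy' : a ++ m ++ b = x ++ G.A :: G.B :: y := by simpa using hxy
    have hm' : m = [] ∨ ∃ X, m = [X] ∧ X ≠ G.A ∧ X ≠ G.B := by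
      rcases hM with hM | ⟨X, hXN, hM⟩
      · exact Or.inl hM
      · exact Or.inr ⟨X, hM, fun h => G.ABCD_not_N'.1 (h ▸ hXN),
          fun h => G.ABCD_not_N'.2.1 (h ▸ hXN)⟩
    have := split_two hxy' hm' (fun h => R_ne_A G (hB _ h) rfl)
      (fun h => L_ne_B G (hA _ h) rfl)
    obtain ⟨hm0, ha, hb⟩ := this
    refine ⟨x, [], y, by simpa using hw', ?_, Or.inl rfl, ?_⟩
    · exact fun c hc => hA c (ha ▸ List.mem_append_left _ hc)
    · exact fun c hc => hB c (hb ▸ List.mem_cons_of_mem _ hc)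
  -- CD → λ
  · subst hform
    simp only at hxy hw'
    rw [hdec] at hxy
    have hxy' : a ++ m ++ b = x ++ G.C :: G.D :: y := by simpa using hxy
    have hm' : m = [] ∨ ∃ X, m = [X] ∧ X ≠ G.C ∧ X ≠ G.D := by
      rcases hM with hM | ⟨X, hXN, hM⟩
      · exact Or.inl hM
      · exact Or.inr ⟨X, hM, fun h => G.ABCD_not_N'.2.2.1 (h ▸ hXN),
          fun h => G.ABCD_not_N'.2.2.2 (h ▸ hXN)⟩
    have := split_two hxy' hm' (fun h => R_ne_C G (hB _ h) rfl)
      (fun h => L_ne_D G (hA _ h) rfl)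
    obtain ⟨hm0, ha, hb⟩ := this
    refine ⟨x, [], y, by simpa using hw', ?_, Or.inl rfl, ?_⟩
    · exact fun c hc => hA c (ha ▸ List.mem_append_left _ hc)
    · exact fun c hc => hB c (hb ▸ List.mem_cons_of_mem _ hc)
  -- S' → λ
  · subst hform
    simp only at hxy hw'
    rw [hdec] at hxy
    obtain ⟨X, hXN, hM⟩ : ∃ X ∈ G.N', m = [X] := by
      rcases hM with hM | hM
      · exfalso
        subst hM
        have : G.S' ∈ a ++ b := by
          rw [show a ++ b = x ++ G.S' :: y by simpa using hxy]; simp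
        rcases List.mem_append.1 this with h | h
        · exact L_not_N' G (hA _ h) G.S'_mem
        · exact R_not_N' G (hB _ h) G.S'_mem
      · exact hM
    subst hM
    have h1 : a ++ X :: b = x ++ G.S' :: y := by simpa using hxy
    obtain ⟨hax, hXX, hby⟩ := split_one h1 (fun h => L_not_N' G (hA _ h) G.S'_mem)
      (fun h => R_not_N' G (hB _ h) G.S'_mem)
    exact ⟨x, [], y, by simpa using hw', fun c hc => hA c (hax ▸ hc), Or.inl rfl,
      fun c hc => hB c (hby ▸ hc)⟩
  -- X → Y₁Y₂
  · subst hform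
    simp only at hxy hw'
    rw [hdec] at hxy
    obtain ⟨X', hX'N, hM⟩ : ∃ X' ∈ G.N', m = [X'] := by
      rcases hM with hM | hM
      · exfalso
        subst hM
        have : X ∈ a ++ b := by
          rw [show a ++ b = x ++ X :: y by simpa using hxy]; simp
        rcases List.mem_append.1 this with h | h
        · exact L_not_N' G (hA _ h) hXN
        · exact R_not_N' G (hB _ h) hXN
      · exact hM
    subst hM
    have h1 : a ++ X' :: b = x ++ X :: y := by simpa using hxy
    obtain ⟨hax, hXX, hby⟩ := split_one h1 (fun h => L_not_N' G (hA _ h) hXN)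
      (fun h => R_not_N' G (hB _ h) hXN)
    rcases hY with ⟨hY₁N, hY₁X, hY₂R⟩ | ⟨hY₁L, hY₂N, hY₂X⟩
    · refine ⟨x, [Y₁], Y₂ :: y, by simpa using hw', ?_, Or.inr ⟨Y₁, hY₁N, rfl⟩, ?_⟩
      · exact fun c hc => hA c (hax ▸ hc)
      · intro c hc
        rcases List.mem_cons.1 hc with rfl | hc
        · exact hY₂R
        · exact hB c (hby ▸ hc)
    · refine ⟨x ++ [Y₁], [Y₂], y, by simp [hw'], ?_, Or.inr ⟨Y₂, hY₂N, rfl⟩, ?_⟩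
      · intro c hc
        rcases List.mem_append.1 hc with hc | hc
        · exact hA c (hax ▸ hc)
        · exact (List.mem_singleton.1 hc) ▸ hY₁L
      · exact fun c hc => hB c (hby ▸ hc)


lemma inv_derives (G : Grammar) {w : Word} (h : Derives G [G.S] w) : Inv G w := by
  induction h with
  | refl => exact ⟨[], [G.S], [], rfl, by simp, Or.inr ⟨G.S, G.S_mem, rfl⟩, by simp⟩
  | tail _ hstep ih => exact inv_step G ih hstep

/-- Every sentential form derivable from `S` in a grammar in Special Geffert
Normal Form contains at most one occurrence of the substring `AB` or `CD`
(in total), and if such a substring occurs then the sentential form contains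
no nonterminal from `N'`. -/
theorem center_substring_unique (G : Grammar) (w : Word)
    (h : Derives G [G.S] w) :
    infixCount [G.A, G.B] w + infixCount [G.C, G.D] w ≤ 1 ∧
    (1 ≤ infixCount [G.A, G.B] w + infixCount [G.C, G.D] w →
      ∀ a ∈ w, a ∉ G.N') := by
  obtain ⟨a, m, b, hdec, hA, hM, hB⟩ := inv_derives G h
  have hAb : G.A ∉ b := fun hc => R_ne_A G (hB _ hc) rfl
  have hCb : G.C ∉ b := fun hc => R_ne_C G (hB _ hc) rfl
  have hBa : G.B ∉ a := fun hc => L_ne_B G (hA _ hc) rfl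
  have hDa : G.D ∉ a := fun hc => L_ne_D G (hA _ hc) rfl
  have hsplit : ∀ (i P Q : ℕ), (w.drop i).take 2 = [P, Q] →
      w = w.take i ++ P :: Q :: (w.drop i).drop 2 := by
    intro i P Q hpq
    nth_rewrite 1 [← List.take_append_drop i w]
    nth_rewrite 1 [← List.take_append_drop 2 (w.drop i)]
    rw [hpq]
    simp
  have hcAB : infixCount [G.A, G.B] w =
      ((List.range w.length).filter
        fun i => decide ((w.drop i).take 2 = [G.A, G.B])).length := rfl
  have hcCD : infixCount [G.C, G.D] w =
      ((List.range w.length).filter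
        fun i => decide ((w.drop i).take 2 = [G.C, G.D])).length := rfl
  rcases hM with hM | ⟨X, hXN, hM⟩
  · -- no nonterminal of N' present: w = a ++ b
    subst hM
    have key : ∀ (P Q : ℕ), P ∉ b → Q ∉ a → ∀ i ∈ List.range w.length,
        (w.drop i).take 2 = [P, Q] → a = w.take i ++ [P] ∧ i + 1 = a.length := by
      intro P Q hPb hQa i hi hpq
      have hw2 : a ++ [] ++ b = w.take i ++ P :: Q :: (w.drop i).drop 2 := by
        rw [← hdec]; exact hsplit i P Q hpq
      obtain ⟨-, ha, -⟩ := split_two hw2 (Or.inl rfl) hPb hQa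
      have hi' : i < w.length := List.mem_range.1 hi
      refine ⟨ha, ?_⟩
      rw [ha]
      simp [List.length_take, Nat.min_eq_left hi'.le]
    constructor
    · by_cases hABn : ((List.range w.length).filter
          fun i => decide ((w.drop i).take 2 = [G.A, G.B])) = []
      · have h0 : infixCount [G.A, G.B] w = 0 := by rw [hcAB, hABn]; rfl
        have h1 : infixCount [G.C, G.D] w ≤ 1 := by
          rw [hcCD]
          refine filter_len_le_one (List.nodup_range) (k := a.length - 1) ?_
          intro i hi hp
          have hpq : (w.drop i).take 2 = [G.C, G.D] := by simpa using hp
          have := (key G.C G.D hCb hDa i hi hpq).2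
          omega
        omega
      · obtain ⟨i, hi⟩ := List.exists_mem_of_ne_nil _ hABn
        have hiR := List.mem_of_mem_filter hi
        have hip : (w.drop i).take 2 = [G.A, G.B] := by
          simpa using List.of_mem_filter hi
        obtain ⟨haA, hiA⟩ := key G.A G.B hAb hBa i hiR hip
        have hCD0 : ((List.range w.length).filter
            fun j => decide ((w.drop j).take 2 = [G.C, G.D])) = [] := by
          rw [List.filter_eq_nil_iff]
          intro j hj
          simp only [decide_eq_true_eq]
          intro hjp
          obtain ⟨haC, hjC⟩ := key G.C G.D hCb hDa j hj hjp
          have hij : i = j := by omega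
          subst hij
          have hAC : ([G.A] : Word) = [G.C] :=
            List.append_cancel_left (haA.symm.trans haC)
          exact G.ABCD_distinct.2.1 (by simpa using hAC)
        have h0 : infixCount [G.C, G.D] w = 0 := by rw [hcCD, hCD0]; rfl
        have h1 : infixCount [G.A, G.B] w ≤ 1 := by
          rw [hcAB]
          refine filter_len_le_one (List.nodup_range) (k := a.length - 1) ?_
          intro j hj hp
          have hpq : (w.drop j).take 2 = [G.A, G.B] := by simpa using hp
          have := (key G.A G.B hAb hBa j hj hpq).2
          omega
        omega
    · intro _ c hc
      rw [hdec] at hc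
      simp only [List.append_nil, List.mem_append] at hc
      rcases hc with hc | hc
      · exact L_not_N' G (hA _ hc)
      · exact R_not_N' G (hB _ hc)
  · -- a nonterminal of N' present: no occurrences at all
    subst hM
    have hnil : ∀ (P Q : ℕ), P ∉ b → Q ∉ a → X ≠ P → X ≠ Q →
        ((List.range w.length).filter
          fun i => decide ((w.drop i).take 2 = [P, Q])) = [] := by
      intro P Q hPb hQa hXP hXQ
      rw [List.filter_eq_nil_iff]
      intro i hi
      simp only [decide_eq_true_eq]
      intro hpq
      have hw2 : a ++ [X] ++ b = w.take i ++ P :: Q :: (w.drop i).drop 2 := by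
        rw [← hdec]; exact hsplit i P Q hpq
      obtain ⟨hm0, -, -⟩ := split_two hw2 (Or.inr ⟨X, rfl, hXP, hXQ⟩) hPb hQa
      simp at hm0
    have h1 : infixCount [G.A, G.B] w = 0 := by
      rw [hcAB, hnil G.A G.B hAb hBa (fun hh => G.ABCD_not_N'.1 (hh ▸ hXN))
        (fun hh => G.ABCD_not_N'.2.1 (hh ▸ hXN))]
      rfl
    have h2 : infixCount [G.C, G.D] w = 0 := by
      rw [hcCD, hnil G.C G.D hCb hDa (fun hh => G.ABCD_not_N'.2.2.1 (hh ▸ hXN))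
        (fun hh => G.ABCD_not_N'.2.2.2 (hh ▸ hXN))]
      rfl
    rw [h1, h2]
    exact ⟨by norm_num, fun hcon => absurd hcon (by norm_num)⟩


end SGNFPaper
end
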